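/- arXiv:math/0411592 — 4 statements merged into one kernel-verified Lean document; each statement's English description precedes it below -/
import Mathlib

section
/- Let l, m be natural numbers, let X : ℝ^l × ℝ^m → ℝ^l × ℝ^m be a C¹ vector field tangent to N = ℝ^l × {0} along N, i.e. the second component X₂(x',0) vanishes for every x' ∈ ℝ^l, and let η : ℝ^l → ℝ^m be C¹. Define the vector field Y on ℝ^l × ℝ^m by Y(x', x'') = (0, η(x')). Then for every x' ∈ ℝ^l, the second component of the Lie bracket [X, Y] at (x',0) equals (Dη)_{x'}(X₁(x',0)) − (D_v X₂(x',v)|_{v=0})(η(x')), where X₁, X₂ denote the two components of X and D_v X₂(x',v)|_{v=0} is the Fréchet derivative of the map v ↦ X₂(x',v) : ℝ^m → ℝ^m at v = 0. (This is the coordinate expression for the covariant derivative ∇_X η of the K-partial connection of Proposition 1.1 on the normal bundle of N.) -/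
/-- Coordinate expression for the covariant derivative of the partial connection on the
normal bundle of `N = ℝ^l × {0}`: if `X` is a C¹ vector field tangent to `N` along `N`
and `Y(x',x'') = (0, η(x'))`, then the second component of `[X,Y]` at `(x',0)` equals
`(Dη)_{x'}(X₁(x',0)) − (D_v X₂(x',v)|_{v=0})(η(x'))`. -/
theorem lieBracket_second_component_eq (l m : ℕ)
    (X : EuclideanSpace ℝ (Fin l) × EuclideanSpace ℝ (Fin m) →
         EuclideanSpace ℝ (Fin l) × EuclideanSpace ℝ (Fin m))
    (η : EuclideanSpace ℝ (Fin l) → EuclideanSpace ℝ (Fin m))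
    (hX : ContDiff ℝ 1 X) (hη : ContDiff ℝ 1 η)
    (hXtan : ∀ x' : EuclideanSpace ℝ (Fin l), (X (x', 0)).2 = 0) :
    ∀ x' : EuclideanSpace ℝ (Fin l),
      (VectorField.lieBracket ℝ X
        (fun p => ((0 : EuclideanSpace ℝ (Fin l)), η p.1)) (x', 0)).2 =
      fderiv ℝ η x' ((X (x', 0)).1) -
        fderiv ℝ (fun v : EuclideanSpace ℝ (Fin m) => (X (x', v)).2) 0 (η x') := by
  intro x'
  have hXd : HasFDerivAt X (fderiv ℝ X (x', (0 : EuclideanSpace ℝ (Fin m))))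
      (x', (0 : EuclideanSpace ℝ (Fin m))) :=
    (hX.differentiable one_ne_zero _).hasFDerivAt
  have hηd : HasFDerivAt η (fderiv ℝ η x') x' := (hη.differentiable one_ne_zero _).hasFDerivAt
  have hY : HasFDerivAt
      (fun p : EuclideanSpace ℝ (Fin l) × EuclideanSpace ℝ (Fin m) =>
        ((0 : EuclideanSpace ℝ (Fin l)), η p.1))
      ((0 : EuclideanSpace ℝ (Fin l) × EuclideanSpace ℝ (Fin m) →L[ℝ]
          EuclideanSpace ℝ (Fin l)).prod
        ((fderiv ℝ η x').comp
          (ContinuousLinearMap.fst ℝ (EuclideanSpace ℝ (Fin l)) (EuclideanSpace ℝ (Fin m)))))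
      (x', (0 : EuclideanSpace ℝ (Fin m))) :=
    HasFDerivAt.prodMk (hasFDerivAt_const (0 : EuclideanSpace ℝ (Fin l)) _) (hηd.comp _ hasFDerivAt_fst)
  have hincl : HasFDerivAt
      (fun v : EuclideanSpace ℝ (Fin m) => ((x', v) :
        EuclideanSpace ℝ (Fin l) × EuclideanSpace ℝ (Fin m)))
      ((0 : EuclideanSpace ℝ (Fin m) →L[ℝ] EuclideanSpace ℝ (Fin l)).prod
        (ContinuousLinearMap.id ℝ (EuclideanSpace ℝ (Fin m))))
      (0 : EuclideanSpace ℝ (Fin m)) :=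
    HasFDerivAt.prodMk (hasFDerivAt_const x' _) (hasFDerivAt_id _)
  have hg : HasFDerivAt (fun v : EuclideanSpace ℝ (Fin m) => (X (x', v)).2)
      (((ContinuousLinearMap.snd ℝ (EuclideanSpace ℝ (Fin l)) (EuclideanSpace ℝ (Fin m))).comp
        (fderiv ℝ X (x', (0 : EuclideanSpace ℝ (Fin m))))).comp
        ((0 : EuclideanSpace ℝ (Fin m) →L[ℝ] EuclideanSpace ℝ (Fin l)).prod
          (ContinuousLinearMap.id ℝ (EuclideanSpace ℝ (Fin m)))))
      (0 : EuclideanSpace ℝ (Fin m)) :=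
    ((ContinuousLinearMap.snd ℝ (EuclideanSpace ℝ (Fin l))
      (EuclideanSpace ℝ (Fin m))).hasFDerivAt.comp _ hXd).comp _ hincl
  rw [VectorField.lieBracket, hY.fderiv, hg.fderiv]
  simp
end

section
/- Let l, m be natural numbers, let X : ℝ^l × ℝ^m → ℝ^l × ℝ^m be a C¹ vector field tangent to N = ℝ^l × {0} along N (its second component X₂(x',0) vanishes for every x'), and let I ⊆ ℝ be an open interval. Let c : ℝ → ℝ^l satisfy, for every t ∈ I, c'(t) = X₁(c(t), 0) (so γ(t) = (c(t),0) is an integral curve of X lying in N), and let w : ℝ → ℝ^l × ℝ^m satisfy the variational (linearized flow) equation w'(t) = (DX)_{(c(t),0)}(w(t)) for every t ∈ I. Then the second component η(t) := w₂(t) satisfies the linear ODE η'(t) = (D_v X₂(c(t), v)|_{v=0})(η(t)) for every t ∈ I, i.e. η is a horizontal lift of γ with respect to the partial connection ∇. (This proves Proposition 1.2: the parallel translation in the normal bundle of N along an integral curve of a K-tangent vector field X is induced by the differential of the flow of X.) -/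
/-- Proposition 1.2: along an integral curve `γ(t) = (c(t),0)` of a C¹ vector field `X`
tangent to `N = ℝ^l × {0}` along `N`, if `w` solves the variational (linearized flow)
equation `w' = (DX)_{γ(t)}(w)`, then the second (normal) component `η = w₂` solves the
horizontal-lift equation `η'(t) = (D_v X₂(c(t),v)|_{v=0})(η(t))` of the partial
connection: the parallel translation in the normal bundle is induced by the differential
of the flow of `X`. -/
theorem normal_component_of_variational_solves_horizontal_lift (l m : ℕ)
    (X : EuclideanSpace ℝ (Fin l) × EuclideanSpace ℝ (Fin m) →
         EuclideanSpace ℝ (Fin l) × EuclideanSpace ℝ (Fin m))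
    (hX : ContDiff ℝ 1 X)
    (hXtan : ∀ x' : EuclideanSpace ℝ (Fin l), (X (x', 0)).2 = 0)
    (I : Set ℝ) (hI : IsOpen I) (hI' : I.OrdConnected)
    (c : ℝ → EuclideanSpace ℝ (Fin l))
    (hc : ∀ t ∈ I, HasDerivAt c ((X (c t, 0)).1) t)
    (w : ℝ → EuclideanSpace ℝ (Fin l) × EuclideanSpace ℝ (Fin m))
    (hw : ∀ t ∈ I, HasDerivAt w (fderiv ℝ X (c t, 0) (w t)) t) :
    ∀ t ∈ I, HasDerivAt (fun s => (w s).2)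
      (fderiv ℝ (fun v : EuclideanSpace ℝ (Fin m) => (X (c t, v)).2) 0 ((w t).2)) t := by
  intro t ht
  have hd : DifferentiableAt ℝ X (c t, 0) := hX.differentiable one_ne_zero _
  have hL := hd.hasFDerivAt
  set L := fderiv ℝ X (c t, 0) with hLdef
  have h1 : HasDerivAt (fun s => (w s).2) ((L (w t)).2) t := by
    have := (ContinuousLinearMap.snd ℝ (EuclideanSpace ℝ (Fin l))
      (EuclideanSpace ℝ (Fin m))).hasFDerivAt.comp_hasDerivAt t (hw t ht)
    exact this
  have hinr : HasFDerivAt (fun v : EuclideanSpace ℝ (Fin m) => ((c t, v) :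
      EuclideanSpace ℝ (Fin l) × EuclideanSpace ℝ (Fin m)))
      (ContinuousLinearMap.inr ℝ _ _) 0 := by
    exact HasFDerivAt.prodMk (hasFDerivAt_const (c t) (0 : EuclideanSpace ℝ (Fin m)))
      (hasFDerivAt_id (0 : EuclideanSpace ℝ (Fin m)))
  have h2 : HasFDerivAt (fun v : EuclideanSpace ℝ (Fin m) => (X (c t, v)).2)
      ((ContinuousLinearMap.snd ℝ _ _).comp (L.comp (ContinuousLinearMap.inr ℝ _ _))) 0 := by
    have := (ContinuousLinearMap.snd ℝ (EuclideanSpace ℝ (Fin l))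
      (EuclideanSpace ℝ (Fin m))).hasFDerivAt.comp 0 (hL.comp 0 hinr)
    exact this
  have h2' : fderiv ℝ (fun v : EuclideanSpace ℝ (Fin m) => (X (c t, v)).2) 0
      = (ContinuousLinearMap.snd ℝ _ _).comp (L.comp (ContinuousLinearMap.inr ℝ _ _)) :=
    h2.fderiv
  have hinl : HasFDerivAt (fun x' : EuclideanSpace ℝ (Fin l) =>
      ((x', (0 : EuclideanSpace ℝ (Fin m))) :
        EuclideanSpace ℝ (Fin l) × EuclideanSpace ℝ (Fin m)))
      (ContinuousLinearMap.inl ℝ _ _) (c t) := by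
    exact HasFDerivAt.prodMk (hasFDerivAt_id (c t))
      (hasFDerivAt_const (0 : EuclideanSpace ℝ (Fin m)) (c t))
  have h3 : HasFDerivAt (fun x' => (X (x', (0 : EuclideanSpace ℝ (Fin m)))).2)
      ((ContinuousLinearMap.snd ℝ _ _).comp (L.comp (ContinuousLinearMap.inl ℝ _ _))) (c t) := by
    have := (ContinuousLinearMap.snd ℝ (EuclideanSpace ℝ (Fin l))
      (EuclideanSpace ℝ (Fin m))).hasFDerivAt.comp (c t) (hL.comp (c t) hinl)
    exact this
  have h3' : (ContinuousLinearMap.snd ℝ _ _).comp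
      (L.comp (ContinuousLinearMap.inl ℝ _ _)) = 0 := by
    have hz : HasFDerivAt (fun x' : EuclideanSpace ℝ (Fin l) => (X (x', 0)).2)
        (0 : EuclideanSpace ℝ (Fin l) →L[ℝ] EuclideanSpace ℝ (Fin m)) (c t) := by
      have hfun : (fun x' : EuclideanSpace ℝ (Fin l) =>
          (X (x', (0 : EuclideanSpace ℝ (Fin m)))).2) = fun _ => 0 := funext hXtan
      rw [hfun]
      exact hasFDerivAt_const _ _
    exact h3.unique hz
  have hw2 : w t = ((w t).1, 0) + (0, (w t).2) := by
    ext <;> simp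
  have h0 : (L ((w t).1, 0)).2 = 0 := by
    have := congrFun (congrArg DFunLike.coe h3') ((w t).1)
    simpa using this
  have key : (L (w t)).2 = (L (0, (w t).2)).2 := by
    rw [hw2, map_add]
    simp [h0]
  rw [h2']
  have : ((ContinuousLinearMap.snd ℝ _ _).comp
      (L.comp (ContinuousLinearMap.inr ℝ _ _))) ((w t).2) = (L (w t)).2 := by
    simp [key]
  rw [this]
  exact h1
end

section
/- Let l, m be natural numbers and let a : ℝ^l × ℝ^m → ℝ^l × ℝ^m be a C¹ vector field tangent to N = ℝ^l × {0} along N, i.e. the second component a₂(x',0) vanishes for every x' ∈ ℝ^l. Fix x' ∈ ℝ^l and ξ'' ∈ ℝ^m and set ξ = (0, ξ'') ∈ ℝ^l × ℝ^m. Then the Fréchet derivative at the point (x',0) of the symbol function x ↦ ⟪ξ, a(x)⟫ satisfies, for every (h,k) ∈ ℝ^l × ℝ^m: d(⟪ξ, a(·)⟫)_{(x',0)}(h,k) = ⟪ξ'', (D_v a₂(x',v)|_{v=0})(k)⟫. In particular this derivative vanishes on ℝ^l × {0}, so the Hamiltonian vector field H_{σ(X)}(x,ξ) = (∂f/∂ξ,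 −∂f/∂x) of the symbol f(x,ξ) = ⟪ξ, a(x)⟫, evaluated at the conormal point ((x',0),(0,ξ'')), is tangent to the conormal bundle (ℝ^l × {0}) × ({0} × ℝ^m) and equals ((a₁(x',0), 0), (0, −B*ξ'')), where B = D_v a₂(x',v)|_{v=0} and B* is its adjoint with respect to the Euclidean inner product. (This is the computation identifying the restricted Hamiltonian field H_{σ(X)}|_{T*_N M} with the vector field X̂ generating parallel translation for the dual partial connection ∇*.) -/
/-- The Euclidean inner product on `ℝ^l × ℝ^m`. -/
noncomputable def prodInner (l m : ℕ)
    (p q : EuclideanSpace ℝ (Fin l) × EuclideanSpace ℝ (Fin m)) : ℝ :=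
  inner ℝ p.1 q.1 + inner ℝ p.2 q.2

/-- For a C¹ vector field `a` on `ℝ^l × ℝ^m` tangent to `N = ℝ^l × {0}` along `N`, the
symbol `f(x,ξ) = ⟪ξ, a(x)⟫` at a conormal point `((x',0),(0,ξ''))` satisfies:
its `x`-derivative in the direction `(h,k)` is `⟪ξ'', B k⟫` with
`B = D_v a₂(x',v)|_{v=0}` (so it vanishes on `ℝ^l × {0}`), its `ξ`-gradient is
`(a₁(x',0), 0)` and its `x`-gradient is `(0, B*ξ'')`; hence the Hamiltonian field
`H_f = (∇_ξ f, −∇_x f)` is tangent to the conormal bundle of `N` and equals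
`((a₁(x',0), 0), (0, −B*ξ''))`. -/
theorem hamiltonian_of_symbol_at_conormal (l m : ℕ)
    (a : EuclideanSpace ℝ (Fin l) × EuclideanSpace ℝ (Fin m) →
         EuclideanSpace ℝ (Fin l) × EuclideanSpace ℝ (Fin m))
    (ha : ContDiff ℝ 1 a)
    (hatan : ∀ x' : EuclideanSpace ℝ (Fin l), (a (x', 0)).2 = 0)
    (x' : EuclideanSpace ℝ (Fin l)) (ξ'' : EuclideanSpace ℝ (Fin m)) :
    let p : EuclideanSpace ℝ (Fin l) × EuclideanSpace ℝ (Fin m) := (x', 0)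
    let ξ : EuclideanSpace ℝ (Fin l) × EuclideanSpace ℝ (Fin m) := (0, ξ'')
    let B := fderiv ℝ (fun v : EuclideanSpace ℝ (Fin m) => (a (x', v)).2) 0
    -- the `x`-derivative of the symbol at the conormal point:
    (∀ (h : EuclideanSpace ℝ (Fin l)) (k : EuclideanSpace ℝ (Fin m)),
        fderiv ℝ (fun x => prodInner l m ξ (a x)) p (h, k) = (inner ℝ ξ'' (B k) : ℝ)) ∧
    -- in particular it vanishes on `ℝ^l × {0}`:
    (∀ h : EuclideanSpace ℝ (Fin l),
        fderiv ℝ (fun x => prodInner l m ξ (a x)) p (h, 0) = 0) ∧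
    -- the `ξ`-gradient of the symbol is `(a₁(x',0), 0)`:
    (∀ w : EuclideanSpace ℝ (Fin l) × EuclideanSpace ℝ (Fin m),
        fderiv ℝ (fun ζ => prodInner l m ζ (a p)) ξ w = prodInner l m ((a p).1, 0) w) ∧
    -- the `x`-gradient of the symbol is `(0, B*ξ'')`:
    (∀ w : EuclideanSpace ℝ (Fin l) × EuclideanSpace ℝ (Fin m),
        fderiv ℝ (fun x => prodInner l m ξ (a x)) p w =
          prodInner l m (0, ContinuousLinearMap.adjoint B ξ'') w) := by
  intro p ξ B
  have hA : HasFDerivAt a (fderiv ℝ a p) p :=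
    (ha.differentiable one_ne_zero p).hasFDerivAt
  set A := fderiv ℝ a p with hAdef
  have hF : HasFDerivAt (fun x => (a x).2)
      ((ContinuousLinearMap.snd ℝ (EuclideanSpace ℝ (Fin l)) (EuclideanSpace ℝ (Fin m))).comp A) p := hA.snd
  -- derivative in the first slot vanishes
  have hzero : HasFDerivAt (fun y : (EuclideanSpace ℝ (Fin l)) => (a (y, 0)).2)
      (((ContinuousLinearMap.snd ℝ (EuclideanSpace ℝ (Fin l)) (EuclideanSpace ℝ (Fin m))).comp A).comp (ContinuousLinearMap.inl ℝ (EuclideanSpace ℝ (Fin l)) (EuclideanSpace ℝ (Fin m)))) x' :=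
    hF.comp (g := fun x => (a x).2) x' (ContinuousLinearMap.inl ℝ (EuclideanSpace ℝ (Fin l)) (EuclideanSpace ℝ (Fin m))).hasFDerivAt
  have hconst : HasFDerivAt (fun y : (EuclideanSpace ℝ (Fin l)) => (a (y, 0)).2) (0 : (EuclideanSpace ℝ (Fin l)) →L[ℝ] (EuclideanSpace ℝ (Fin m))) x' := by
    have : (fun y : (EuclideanSpace ℝ (Fin l)) => (a (y, 0)).2) = fun _ : (EuclideanSpace ℝ (Fin l)) => (0 : (EuclideanSpace ℝ (Fin m))) := by
      funext y; exact hatan y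
    rw [this]; exact hasFDerivAt_const _ _
  have h1 : ∀ h : (EuclideanSpace ℝ (Fin l)), (A (h, 0)).2 = 0 := by
    intro h
    have := hzero.unique hconst
    have := congrArg (fun (T : (EuclideanSpace ℝ (Fin l)) →L[ℝ] (EuclideanSpace ℝ (Fin m))) => T h) this
    simpa using this
  -- B in terms of A
  have hinr : HasFDerivAt (fun v : (EuclideanSpace ℝ (Fin m)) => ((x' : (EuclideanSpace ℝ (Fin l))), v))
      (ContinuousLinearMap.inr ℝ (EuclideanSpace ℝ (Fin l)) (EuclideanSpace ℝ (Fin m))) 0 := by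
    have : (fun v : (EuclideanSpace ℝ (Fin m)) => ((x' : (EuclideanSpace ℝ (Fin l))), v))
        = fun v : (EuclideanSpace ℝ (Fin m)) => ((x', (0:(EuclideanSpace ℝ (Fin m)))) + (ContinuousLinearMap.inr ℝ (EuclideanSpace ℝ (Fin l)) (EuclideanSpace ℝ (Fin m))) v) := by
      funext v; simp [Prod.ext_iff]
    rw [this]
    exact (ContinuousLinearMap.inr ℝ (EuclideanSpace ℝ (Fin l)) (EuclideanSpace ℝ (Fin m))).hasFDerivAt.const_add _
  have hB : HasFDerivAt (fun v : (EuclideanSpace ℝ (Fin m)) => (a (x', v)).2)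
      (((ContinuousLinearMap.snd ℝ (EuclideanSpace ℝ (Fin l)) (EuclideanSpace ℝ (Fin m))).comp A).comp (ContinuousLinearMap.inr ℝ (EuclideanSpace ℝ (Fin l)) (EuclideanSpace ℝ (Fin m)))) 0 :=
    hF.comp 0 hinr
  have hBdef : B = ((ContinuousLinearMap.snd ℝ (EuclideanSpace ℝ (Fin l)) (EuclideanSpace ℝ (Fin m))).comp A).comp
      (ContinuousLinearMap.inr ℝ (EuclideanSpace ℝ (Fin l)) (EuclideanSpace ℝ (Fin m))) := hB.fderiv
  have hA2 : ∀ (h : (EuclideanSpace ℝ (Fin l))) (k : (EuclideanSpace ℝ (Fin m))), (A (h, k)).2 = B k := by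
    intro h k
    have hsplit : ((h, k) : (EuclideanSpace ℝ (Fin l)) × (EuclideanSpace ℝ (Fin m))) = (h, 0) + (0, k) := by simp [Prod.ext_iff]
    rw [hsplit, map_add, Prod.snd_add, h1, zero_add, hBdef]
    simp
  -- derivative of the symbol in x
  have hf : HasFDerivAt (fun x => prodInner l m ξ (a x))
      ((innerSL ℝ ξ'').comp ((ContinuousLinearMap.snd ℝ (EuclideanSpace ℝ (Fin l)) (EuclideanSpace ℝ (Fin m))).comp A)) p := by
    have : (fun x => prodInner l m ξ (a x)) = fun x => (innerSL ℝ ξ'') ((a x).2) := by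
      funext x; simp [prodInner, ξ]
    rw [this]
    exact (innerSL ℝ ξ'').hasFDerivAt.comp p hF
  have hfd : ∀ w : (EuclideanSpace ℝ (Fin l)) × (EuclideanSpace ℝ (Fin m)),
      fderiv ℝ (fun x => prodInner l m ξ (a x)) p w = (inner ℝ ξ'' (B w.2) : ℝ) := by
    intro w
    rw [hf.fderiv]
    have := hA2 w.1 w.2
    simp only [ContinuousLinearMap.comp_apply, ContinuousLinearMap.coe_snd', innerSL_apply_apply,
      Prod.snd]
    rw [show (A w).2 = B w.2 from this]
  refine ⟨fun h k => hfd (h, k), fun h => by simpa using hfd (h, 0), ?_, ?_⟩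
  · -- ξ-gradient
    intro w
    have hap2 : (a p).2 = 0 := hatan x'
    have heq : (fun ζ : (EuclideanSpace ℝ (Fin l)) × (EuclideanSpace ℝ (Fin m)) => prodInner l m ζ (a p))
        = fun ζ : (EuclideanSpace ℝ (Fin l)) × (EuclideanSpace ℝ (Fin m)) => ((innerSL ℝ (a p).1).comp (ContinuousLinearMap.fst ℝ (EuclideanSpace ℝ (Fin l)) (EuclideanSpace ℝ (Fin m)))) ζ := by
      funext ζ
      simp only [prodInner, hap2, inner_zero_right, add_zero, ContinuousLinearMap.comp_apply,
        ContinuousLinearMap.coe_fst', innerSL_apply_apply]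
      exact real_inner_comm _ _
    rw [heq, ContinuousLinearMap.fderiv]
    simp only [prodInner, ContinuousLinearMap.comp_apply, ContinuousLinearMap.coe_fst',
      innerSL_apply_apply, inner_zero_left, add_zero]
  · intro w
    rw [hfd w]
    simp only [prodInner, inner_zero_left, zero_add, ContinuousLinearMap.adjoint_inner_left]
end

section
/- Let m be a natural number and A : ℝ → (ℝ^m →L[ℝ] ℝ^m) a continuous family of continuous linear maps, and let t₀, t₁ ∈ ℝ. Then there exists a linear equivalence P : ℝ^m ≃ₗ[ℝ] ℝ^m such that: (a) every curve η : ℝ → ℝ^m satisfying η'(t) = A(t)(η(t)) for all t ∈ ℝ satisfies η(t₁) = P(η(t₀)); and (b) for every v ∈ ℝ^m there exists a curve η : ℝ → ℝ^m with η'(t) = A(t)(η(t)) for all t ∈ ℝ and η(t₀) = v. (Existence and uniqueness of horizontal lifts of a curve provide linear isomorphisms Φ_{t₀,t₁} between fibers of the normal bundle — the parallel translation of the partial connection ∇.) -/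
open Set

section ODE

variable {E : Type*} [NormedAddCommGroup E] [NormedSpace ℝ E] [CompleteSpace E]

/-- Glue two solutions of an ODE at a common point. -/
lemma ode_glue (v : ℝ → E → E) {a c b : ℝ} (hac : a ≤ c) (hcb : c ≤ b) {g h : ℝ → E}
    (hg : ∀ t ∈ Icc a c, HasDerivWithinAt g (v t (g t)) (Icc a c) t)
    (hh : ∀ t ∈ Icc c b, HasDerivWithinAt h (v t (h t)) (Icc c b) t)
    (hgh : g c = h c) :
    ∃ f : ℝ → E, (∀ t ∈ Icc a c, f t = g t) ∧ (∀ t ∈ Icc c b, f t = h t) ∧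
      ∀ t ∈ Icc a b, HasDerivWithinAt f (v t (f t)) (Icc a b) t := by
  classical
  set f : ℝ → E := fun t => if t ≤ c then g t else h t with hfdef
  have hfg : ∀ t ∈ Icc a c, f t = g t := fun t ht => if_pos ht.2
  have hfh : ∀ t ∈ Icc c b, f t = h t := by
    intro t ht
    by_cases hc : t ≤ c
    · have : t = c := le_antisymm hc ht.1
      simp [f, this, hgh]
    · simp [f, hc]
  refine ⟨f, hfg, hfh, ?_⟩
  intro t ht
  rcases lt_trichotomy t c with h1 | h1 | h1
  · have ht' : t ∈ Icc a c := ⟨ht.1, h1.le⟩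
    have hmem : Icc a c ∈ nhdsWithin t (Icc a b) := by
      refine mem_nhdsWithin.mpr ⟨Iio c, isOpen_Iio, h1, ?_⟩
      rintro x ⟨hx1, hx2⟩
      exact ⟨hx2.1, le_of_lt hx1⟩
    have H := ((hg t ht').mono_of_mem_nhdsWithin hmem).congr_of_eventuallyEq
      (Filter.eventuallyEq_of_mem hmem (fun x hx => hfg x hx)) (hfg t ht')
    rw [hfg t ht']
    exact H
  · subst h1
    have htc : t ∈ Icc a t := ⟨hac, le_rfl⟩
    have htc' : t ∈ Icc t b := ⟨le_rfl, hcb⟩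
    have H1 : HasDerivWithinAt f (v t (g t)) (Icc a t) t :=
      (hg t htc).congr hfg (hfg t htc)
    have H2 : HasDerivWithinAt f (v t (g t)) (Icc t b) t := by
      have := (hh t htc').congr hfh (hfh t htc')
      rwa [← hgh] at this
    have := H1.union H2
    rw [Icc_union_Icc_eq_Icc hac hcb] at this
    rw [hfg t htc]
    exact this
  · have ht' : t ∈ Icc c b := ⟨h1.le, ht.2⟩
    have hmem : Icc c b ∈ nhdsWithin t (Icc a b) := by
      refine mem_nhdsWithin.mpr ⟨Ioi c, isOpen_Ioi, h1, ?_⟩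
      rintro x ⟨hx1, hx2⟩
      exact ⟨le_of_lt hx1, hx2.2⟩
    have H := ((hh t ht').mono_of_mem_nhdsWithin hmem).congr_of_eventuallyEq
      (Filter.eventuallyEq_of_mem hmem (fun x hx => hfh x hx)) (hfh t ht')
    rw [hfh t ht']
    exact H

/-- A single Picard–Lindelöf step of uniform length for a globally bounded linear ODE. -/
lemma ode_step (A : ℝ → E →L[ℝ] E) (hA : Continuous A) {L : ℝ} (hL : 0 ≤ L)
    (hb : ∀ t, ‖A t‖ ≤ L) (s : ℝ) (v : E) :
    ∃ f : ℝ → E, f s = v ∧ ∀ t ∈ Icc (s - (2*L+1)⁻¹) (s + (2*L+1)⁻¹),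
      HasDerivWithinAt f (A t (f t)) (Icc (s - (2*L+1)⁻¹) (s + (2*L+1)⁻¹)) t := by
  have h2L : (0:ℝ) < 2*L+1 := by linarith
  have hε : (0:ℝ) < (2*L+1)⁻¹ := by positivity
  have hpl : IsPicardLindelof (fun t (x : E) => A t x) (tmin := s - (2*L+1)⁻¹)
      (tmax := s + (2*L+1)⁻¹) ⟨s, by constructor <;> linarith⟩ v ⟨‖v‖ + 1, by positivity⟩ 0
      ⟨L * (2*‖v‖+1), by positivity⟩ ⟨L, hL⟩ := by
    constructor
    · intro t _
      refine LipschitzWith.lipschitzOnWith (LipschitzWith.weaken (A t).lipschitz ?_)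
      change ‖A t‖ ≤ L
      exact hb t
    · intro x _
      exact (hA.clm_apply continuous_const).continuousOn
    · intro t _ x hx
      have hx' : ‖x‖ ≤ 2*‖v‖+1 := by
        have h1 : ‖x - v‖ ≤ ‖v‖ + 1 := mem_closedBall_iff_norm.mp hx
        have h2 : ‖x‖ ≤ ‖x - v‖ + ‖v‖ := by
          calc ‖x‖ = ‖x - v + v‖ := by rw [sub_add_cancel]
          _ ≤ ‖x - v‖ + ‖v‖ := norm_add_le _ _
        linarith
      calc ‖A t x‖ ≤ ‖A t‖ * ‖x‖ := (A t).le_opNorm x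
      _ ≤ L * (2*‖v‖+1) := by
          apply mul_le_mul (hb t) hx' (norm_nonneg x) hL
    · have hmax : max ((s + (2*L+1)⁻¹) - s) (s - (s - (2*L+1)⁻¹)) = (2*L+1)⁻¹ := by
        rw [add_sub_cancel_left, sub_sub_cancel, max_self]
      show L * (2*‖v‖+1) * max ((s + (2*L+1)⁻¹) - s) (s - (s - (2*L+1)⁻¹)) ≤ (‖v‖ + 1) - 0
      rw [hmax, inv_eq_one_div, mul_one_div, sub_zero, div_le_iff₀ h2L]
      nlinarith [norm_nonneg v]
  obtain ⟨f, hf1, hf2⟩ := hpl.exists_eq_forall_mem_Icc_hasDerivWithinAt₀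
  exact ⟨f, hf1, hf2⟩

/-- Extension to the right by induction, with uniform step size. -/
lemma ode_rext (A : ℝ → E →L[ℝ] E) (hA : Continuous A) {L : ℝ} (hL : 0 ≤ L)
    (hb : ∀ t, ‖A t‖ ≤ L) :
    ∀ (k : ℕ) (s : ℝ) (v : E) (b : ℝ), b - s ≤ (k : ℝ) * (2*L+1)⁻¹ →
    ∃ f : ℝ → E, f s = v ∧ ∀ t ∈ Icc s b, HasDerivWithinAt f (A t (f t)) (Icc s b) t := by
  have hε : (0:ℝ) < (2*L+1)⁻¹ := by positivity
  intro k
  induction k with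
  | zero =>
    intro s v b hbs
    norm_num at hbs
    obtain ⟨f, hf1, hf2⟩ := ode_step A hA hL hb s v
    refine ⟨f, hf1, fun t ht => ?_⟩
    have ht1 : s ≤ t := ht.1
    have ht2 : t ≤ b := ht.2
    exact (hf2 t ⟨by linarith, by linarith⟩).mono
      (Icc_subset_Icc (by linarith) (by linarith))
  | succ k ih =>
    intro s v b hbs
    obtain ⟨g, hg1, hg2⟩ := ode_step A hA hL hb s v
    by_cases hcase : b ≤ s + (2*L+1)⁻¹
    · refine ⟨g, hg1, fun t ht => ?_⟩
      have ht1 : s ≤ t := ht.1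
      have ht2 : t ≤ b := ht.2
      exact (hg2 t ⟨by linarith, by linarith⟩).mono
        (Icc_subset_Icc (by linarith) hcase)
    · push_neg at hcase
      obtain ⟨h, hh1, hh2⟩ := ih (s + (2*L+1)⁻¹) (g (s + (2*L+1)⁻¹)) b (by
        push_cast at hbs ⊢
        linarith)
      have hg2' : ∀ t ∈ Icc s (s + (2*L+1)⁻¹),
          HasDerivWithinAt g (A t (g t)) (Icc s (s + (2*L+1)⁻¹)) t := by
        intro t ht
        exact (hg2 t ⟨by linarith [ht.1], ht.2⟩).mono (Icc_subset_Icc (by linarith) le_rfl)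
      obtain ⟨f, hf1, hf2, hf3⟩ := ode_glue (fun t (x : E) => A t x)
        (by linarith : s ≤ s + (2*L+1)⁻¹) hcase.le hg2' hh2 hh1.symm
      refine ⟨f, ?_, hf3⟩
      rw [hf1 s ⟨le_rfl, by linarith⟩, hg1]

/-- Extension to the right for arbitrary endpoint. -/
lemma ode_rext' (A : ℝ → E →L[ℝ] E) (hA : Continuous A) {L : ℝ} (hL : 0 ≤ L)
    (hb : ∀ t, ‖A t‖ ≤ L) (s : ℝ) (v : E) (b : ℝ) :
    ∃ f : ℝ → E, f s = v ∧ ∀ t ∈ Icc s b, HasDerivWithinAt f (A t (f t)) (Icc s b) t := by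
  have hε : (0:ℝ) < (2*L+1)⁻¹ := by positivity
  refine ode_rext A hA hL hb ⌈(b - s) * (2*L+1)⌉₊ s v b ?_
  have h1 : (b - s) * (2*L+1) ≤ (⌈(b - s) * (2*L+1)⌉₊ : ℝ) := Nat.le_ceil _
  calc b - s = (b - s) * (2*L+1) * (2*L+1)⁻¹ := by
        field_simp
  _ ≤ (⌈(b - s) * (2*L+1)⌉₊ : ℝ) * (2*L+1)⁻¹ :=
        mul_le_mul_of_nonneg_right h1 hε.le

/-- Extension to the left, by time reversal. -/
lemma ode_lext (A : ℝ → E →L[ℝ] E) (hA : Continuous A) {L : ℝ} (hL : 0 ≤ L)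
    (hb : ∀ t, ‖A t‖ ≤ L) (s : ℝ) (v : E) (a : ℝ) :
    ∃ f : ℝ → E, f s = v ∧ ∀ t ∈ Icc a s, HasDerivWithinAt f (A t (f t)) (Icc a s) t := by
  set B : ℝ → E →L[ℝ] E := fun t => -(A (2*s - t)) with hBdef
  have hBcont : Continuous B := (hA.comp (continuous_const.sub continuous_id)).neg
  have hBb : ∀ t, ‖B t‖ ≤ L := by
    intro t
    rw [hBdef]
    simpa using hb (2*s - t)
  obtain ⟨f, hf1, hf2⟩ := ode_rext' B hBcont hL hBb s v (2*s - a)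
  refine ⟨fun t => f (2*s - t), by simpa using (by rw [show 2*s - s = s by ring, hf1]), ?_⟩
  intro t ht
  have hτ : 2*s - t ∈ Icc s (2*s - a) := ⟨by linarith [ht.2], by linarith [ht.1]⟩
  have hmap : MapsTo (fun t : ℝ => 2*s - t) (Icc a s) (Icc s (2*s - a)) := by
    intro x hx
    simp only [mem_Icc]
    constructor <;> [linarith [hx.2]; linarith [hx.1]]
  have hd : HasDerivWithinAt (fun t : ℝ => 2*s - t) (-1) (Icc a s) t :=
    ((hasDerivAt_id t).const_sub (2*s)).hasDerivWithinAt
  have H := (hf2 (2*s - t) hτ).scomp t hd hmap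
  have heq : (-1 : ℝ) • (B (2*s - t)) (f (2*s - t)) = A t (f (2*s - t)) := by
    rw [hBdef]
    simp [sub_sub_cancel]
  rw [heq] at H
  exact H

/-- Solutions on a compact interval for globally bounded `A`. -/
lemma ode_icc_bdd (A : ℝ → E →L[ℝ] E) (hA : Continuous A) {L : ℝ} (hL : 0 ≤ L)
    (hb : ∀ t, ‖A t‖ ≤ L) {a b : ℝ} (s : ℝ) (has : a ≤ s) (hsb : s ≤ b) (v : E) :
    ∃ f : ℝ → E, f s = v ∧ ∀ t ∈ Icc a b, HasDerivWithinAt f (A t (f t)) (Icc a b) t := by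
  obtain ⟨g, hg1, hg2⟩ := ode_lext A hA hL hb s v a
  obtain ⟨h, hh1, hh2⟩ := ode_rext' A hA hL hb s v b
  obtain ⟨f, hf1, hf2, hf3⟩ := ode_glue (fun t (x : E) => A t x) has hsb hg2 hh2
    (by rw [hg1, hh1])
  exact ⟨f, by rw [hf1 s ⟨has, le_rfl⟩, hg1], hf3⟩

/-- The clamping map onto `[a, b]`. -/
lemma clamp_mem {a b : ℝ} (hab : a ≤ b) (t : ℝ) : min b (max a t) ∈ Icc a b :=
  ⟨le_min hab (le_max_left _ _), min_le_left _ _⟩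

lemma clamp_eq {a b t : ℝ} (ht : t ∈ Icc a b) : min b (max a t) = t := by
  rw [max_eq_right ht.1, min_eq_right ht.2]

/-- Solutions on a compact interval for continuous `A`, via clamping. -/
lemma ode_icc (A : ℝ → E →L[ℝ] E) (hA : Continuous A) {a b : ℝ} (s : ℝ)
    (has : a ≤ s) (hsb : s ≤ b) (v : E) :
    ∃ f : ℝ → E, f s = v ∧ ∀ t ∈ Icc a b, HasDerivWithinAt f (A t (f t)) (Icc a b) t := by
  have hab : a ≤ b := has.trans hsb
  obtain ⟨C, hC⟩ := (isCompact_Icc (a := a) (b := b)).exists_bound_of_continuousOn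
    hA.continuousOn
  set B : ℝ → E →L[ℝ] E := fun t => A (min b (max a t)) with hBdef
  have hBcont : Continuous B :=
    hA.comp (continuous_const.min (continuous_const.max continuous_id))
  have hBb : ∀ t, ‖B t‖ ≤ max C 0 :=
    fun t => le_trans (hC _ (clamp_mem hab t)) (le_max_left _ _)
  obtain ⟨f, hf1, hf2⟩ := ode_icc_bdd B hBcont (le_max_right C 0) hBb s has hsb v
  refine ⟨f, hf1, fun t ht => ?_⟩
  have := hf2 t ht
  rw [hBdef] at this
  simp only at this
  rwa [clamp_eq ht] at this

/-- Uniqueness of solutions on a compact interval. -/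
lemma ode_uniq (A : ℝ → E →L[ℝ] E) (hA : Continuous A) {a b s : ℝ} (hs : s ∈ Ioo a b)
    {f g : ℝ → E}
    (hfc : ContinuousOn f (Icc a b)) (hf : ∀ t ∈ Ioo a b, HasDerivAt f (A t (f t)) t)
    (hgc : ContinuousOn g (Icc a b)) (hg : ∀ t ∈ Ioo a b, HasDerivAt g (A t (g t)) t)
    (heq : f s = g s) : EqOn f g (Icc a b) := by
  have hab : a ≤ b := (hs.1.trans hs.2).le
  obtain ⟨C, hC⟩ := (isCompact_Icc (a := a) (b := b)).exists_bound_of_continuousOn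
    hA.continuousOn
  set B : ℝ → E →L[ℝ] E := fun t => A (min b (max a t)) with hBdef
  have hBb : ∀ t, ‖B t‖ ≤ max C 0 :=
    fun t => le_trans (hC _ (clamp_mem hab t)) (le_max_left _ _)
  have hlip : ∀ t, LipschitzOnWith ⟨max C 0, le_max_right C 0⟩
      (fun x : E => B t x) (univ : Set E) := by
    intro t
    refine LipschitzWith.lipschitzOnWith (LipschitzWith.weaken (B t).lipschitz ?_)
    change ‖B t‖ ≤ max C 0
    exact hBb t
  have hf' : ∀ t ∈ Ioo a b, HasDerivAt f (B t (f t)) t := by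
    intro t ht
    have := hf t ht
    rw [hBdef]
    simp only
    rwa [clamp_eq (Ioo_subset_Icc_self ht)]
  have hg' : ∀ t ∈ Ioo a b, HasDerivAt g (B t (g t)) t := by
    intro t ht
    have := hg t ht
    rw [hBdef]
    simp only
    rwa [clamp_eq (Ioo_subset_Icc_self ht)]
  exact ODE_solution_unique_of_mem_Icc (v := fun t (x : E) => B t x)
    (s := fun _ => (univ : Set E)) (fun t _ => hlip t) hs hfc hf' (fun _ _ => trivial)
    hgc hg' (fun _ _ => trivial) heq

/-- Global existence of solutions of a linear ODE. -/
lemma ode_global (A : ℝ → E →L[ℝ] E) (hA : Continuous A) (s : ℝ) (v : E) :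
    ∃ η : ℝ → E, η s = v ∧ ∀ t, HasDerivAt η (A t (η t)) t := by
  have H : ∀ n : ℕ, ∃ f : ℝ → E, f s = v ∧ ∀ t ∈ Icc (s - ((n:ℝ)+1)) (s + ((n:ℝ)+1)),
      HasDerivWithinAt f (A t (f t)) (Icc (s - ((n:ℝ)+1)) (s + ((n:ℝ)+1))) t := by
    intro n
    have hn : (0:ℝ) ≤ (n:ℝ) + 1 := by positivity
    exact ode_icc A hA s (by linarith) (by linarith) v
  choose f hf0 hfd using H
  have hder : ∀ (n : ℕ) (t : ℝ), t ∈ Ioo (s - ((n:ℝ)+1)) (s + ((n:ℝ)+1)) →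
      HasDerivAt (f n) (A t (f n t)) t :=
    fun n t ht => (hfd n t (Ioo_subset_Icc_self ht)).hasDerivAt (Icc_mem_nhds ht.1 ht.2)
  have hcont : ∀ n : ℕ, ContinuousOn (f n) (Icc (s - ((n:ℝ)+1)) (s + ((n:ℝ)+1))) :=
    fun n t ht => (hfd n t ht).continuousWithinAt
  have key : ∀ (p q : ℕ) (t : ℝ), |t - s| < (p:ℝ) + 1 → |t - s| < (q:ℝ) + 1 →
      f p t = f q t := by
    intro p q t hp hq
    set c : ℝ := min ((p:ℝ)+1) ((q:ℝ)+1) with hc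
    have hc0 : (0:ℝ) < c := lt_min (by positivity) (by positivity)
    have hcp : c ≤ (p:ℝ)+1 := min_le_left _ _
    have hcq : c ≤ (q:ℝ)+1 := min_le_right _ _
    have habs : |t - s| ≤ c := le_min hp.le hq.le
    obtain ⟨h1, h2⟩ := abs_le.mp habs
    refine ode_uniq A hA (a := s - c) (b := s + c) (s := s) ⟨by linarith, by linarith⟩
      ((hcont p).mono (Icc_subset_Icc (by linarith) (by linarith)))
      (fun t' ht' => hder p t' ⟨by linarith [ht'.1], by linarith [ht'.2]⟩)
      ((hcont q).mono (Icc_subset_Icc (by linarith) (by linarith)))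
      (fun t' ht' => hder q t' ⟨by linarith [ht'.1], by linarith [ht'.2]⟩)
      (by rw [hf0 p, hf0 q]) ⟨by linarith, by linarith⟩
  refine ⟨fun t => f ⌊|t - s|⌋₊ t, ?_, ?_⟩
  · simp only [sub_self, abs_zero, Nat.floor_zero]
    exact hf0 0
  · intro t
    set N := ⌊|t - s|⌋₊ with hN
    have htN : |t - s| < (N:ℝ) + 1 := Nat.lt_floor_add_one _
    obtain ⟨h1, h2⟩ := abs_lt.mp htN
    have hmemN : t ∈ Ioo (s - ((N:ℝ)+1)) (s + ((N:ℝ)+1)) := ⟨by linarith, by linarith⟩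
    have hev : (fun t => f ⌊|t - s|⌋₊ t) =ᶠ[nhds t] f N := by
      refine Filter.eventually_of_mem (Ioo_mem_nhds hmemN.1 hmemN.2) ?_
      intro t' ht'
      exact key _ _ t' (Nat.lt_floor_add_one _)
        (abs_lt.mpr ⟨by linarith [ht'.1], by linarith [ht'.2]⟩)
    have hd := (hder N t hmemN).congr_of_eventuallyEq hev
    exact hd

/-- Global uniqueness of solutions of a linear ODE. -/
lemma ode_global_uniq (A : ℝ → E →L[ℝ] E) (hA : Continuous A) {η θ : ℝ → E}
    (hη : ∀ t, HasDerivAt η (A t (η t)) t) (hθ : ∀ t, HasDerivAt θ (A t (θ t)) t)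
    {s : ℝ} (h0 : η s = θ s) (t : ℝ) : η t = θ t := by
  have h1 : (0:ℝ) ≤ |t - s| := abs_nonneg _
  have h2 : -(|t - s|) ≤ t - s := neg_abs_le _
  have h3 : t - s ≤ |t - s| := le_abs_self _
  refine ode_uniq A hA (a := s - (|t - s| + 1)) (b := s + (|t - s| + 1)) (s := s)
    ⟨by linarith, by linarith⟩
    (fun t' _ => (hη t').continuousAt.continuousWithinAt)
    (fun t' _ => hη t')
    (fun t' _ => (hθ t').continuousAt.continuousWithinAt)
    (fun t' _ => hθ t')
    h0 ⟨by linarith, by linarith⟩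

end ODE

/-- Existence and uniqueness of horizontal lifts provide linear isomorphisms between
fibers (parallel translation): for a continuous family `A(t)` of linear maps and times
`t₀, t₁`, there is a linear equivalence `P` of `ℝ^m` such that every solution of
`η' = A(t) η` satisfies `η(t₁) = P(η(t₀))`, and every initial value at `t₀` is attained
by some solution. -/
theorem parallel_translation_linear_equiv (m : ℕ)
    (A : ℝ → (EuclideanSpace ℝ (Fin m) →L[ℝ] EuclideanSpace ℝ (Fin m)))
    (hA : Continuous A) (t₀ t₁ : ℝ) :
    ∃ P : EuclideanSpace ℝ (Fin m) ≃ₗ[ℝ] EuclideanSpace ℝ (Fin m),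
      (∀ η : ℝ → EuclideanSpace ℝ (Fin m),
        (∀ t, HasDerivAt η (A t (η t)) t) → η t₁ = P (η t₀)) ∧
      (∀ v : EuclideanSpace ℝ (Fin m),
        ∃ η : ℝ → EuclideanSpace ℝ (Fin m),
          (∀ t, HasDerivAt η (A t (η t)) t) ∧ η t₀ = v) := by
  classical
  choose F hF0 hFd using fun v : EuclideanSpace ℝ (Fin m) => ode_global A hA t₀ v
  choose G hG0 hGd using fun w : EuclideanSpace ℝ (Fin m) => ode_global A hA t₁ w
  have huniq : ∀ (η θ : ℝ → EuclideanSpace ℝ (Fin m)),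
      (∀ t, HasDerivAt η (A t (η t)) t) → (∀ t, HasDerivAt θ (A t (θ t)) t) →
      ∀ s : ℝ, η s = θ s → ∀ t, η t = θ t :=
    fun η θ hη hθ s h0 t => ode_global_uniq A hA hη hθ h0 t
  let T : EuclideanSpace ℝ (Fin m) →ₗ[ℝ] EuclideanSpace ℝ (Fin m) :=
    { toFun := fun v => F v t₁
      map_add' := by
        intro v w
        have hsum : ∀ t, HasDerivAt (fun t => F v t + F w t)
            (A t (F v t + F w t)) t := by
          intro t
          have := (hFd v t).add (hFd w t)
          rwa [← map_add] at this
        exact huniq _ _ (hFd (v + w)) hsum t₀ (by rw [hF0, hF0, hF0]) t₁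
      map_smul' := by
        intro c v
        have hsm : ∀ t, HasDerivAt (fun t => c • F v t)
            (A t (c • F v t)) t := by
          intro t
          have := (hFd v t).const_smul c
          rwa [← map_smul] at this
        exact huniq _ _ (hFd (c • v)) hsm t₀ (by rw [hF0, hF0]) t₁ }
  let S : EuclideanSpace ℝ (Fin m) →ₗ[ℝ] EuclideanSpace ℝ (Fin m) :=
    { toFun := fun w => G w t₀
      map_add' := by
        intro v w
        have hsum : ∀ t, HasDerivAt (fun t => G v t + G w t)
            (A t (G v t + G w t)) t := by
          intro t
          have := (hGd v t).add (hGd w t)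
          rwa [← map_add] at this
        exact huniq _ _ (hGd (v + w)) hsum t₁ (by rw [hG0, hG0, hG0]) t₀
      map_smul' := by
        intro c v
        have hsm : ∀ t, HasDerivAt (fun t => c • G v t)
            (A t (c • G v t)) t := by
          intro t
          have := (hGd v t).const_smul c
          rwa [← map_smul] at this
        exact huniq _ _ (hGd (c • v)) hsm t₁ (by rw [hG0, hG0]) t₀ }
  have hTS : ∀ w, T (S w) = w := by
    intro w
    have := huniq (F (G w t₀)) (G w) (hFd _) (hGd _) t₀ (hF0 _) t₁
    calc T (S w) = F (G w t₀) t₁ := rfl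
    _ = G w t₁ := this
    _ = w := hG0 w
  have hST : ∀ v, S (T v) = v := by
    intro v
    have := huniq (G (F v t₁)) (F v) (hGd _) (hFd _) t₁ (hG0 _) t₀
    calc S (T v) = G (F v t₁) t₀ := rfl
    _ = F v t₀ := this
    _ = v := hF0 v
  refine ⟨LinearEquiv.ofLinear T S (LinearMap.ext hTS) (LinearMap.ext hST), ?_, ?_⟩
  · intro η hη
    have h := huniq η (F (η t₀)) hη (hFd _) t₀ (hF0 _).symm t₁
    simpa [LinearEquiv.ofLinear_apply, T] using h
  · exact fun v => ⟨F v, hFd v, hF0 v⟩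
end
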